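/- Let k ≥ 1 be an integer and let Φ : ℝ² → ℂ be a C^k function that is 1-periodic in each variable. For integers n ≥ 1 and x, x' ∈ ℤ define H^{(n)}_{x,x'} = (1/(n+1)²) Σ_{j,j'=0}^n Φ(j/(n+1), j'/(n+1)) exp(2πi j x/(n+1)) exp(2πi j' x'/(n+1)). Then there exists a constant C > 0 such that for all n ≥ 1, all x, x' ∈ ℤ, and all nonnegative integers ℓ, ℓ' with ℓ + ℓ' ≤ k, one has |H^{(n)}_{x,x'}| ≤ C / (χ_n(x)^ℓ · χ_n(x')^{ℓ'}). -/

import Mathlib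

open Real

noncomputable section

variable {E F : Type*} [NormedAddCommGroup E] [NormedSpace ℝ E]

/-- Difference operator with step `v`. -/
def dOp (v : ℝ × ℝ) (f : ℝ × ℝ → E) : ℝ × ℝ → E := fun p => f (p + v) - f p

def dIter : List (ℝ × ℝ) → (ℝ × ℝ → E) → ℝ × ℝ → E
  | [], f => f
  | v :: L, f => dOp v (dIter L f)

lemma contDiff_translate {m : ℕ∞} {f : ℝ × ℝ → E} (hf : ContDiff ℝ m f) (v : ℝ × ℝ) :
    ContDiff ℝ m (fun p => f (p + v)) :=
  hf.comp (contDiff_id.add contDiff_const)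

lemma contDiff_dIter {m : ℕ∞} {f : ℝ × ℝ → E} (hf : ContDiff ℝ m f) (L : List (ℝ × ℝ)) :
    ContDiff ℝ m (dIter L f) := by
  induction L with
  | nil => exact hf
  | cons v L ih => exact (contDiff_translate ih v).sub ih

lemma fderiv_translate {f : ℝ × ℝ → E} (hf : Differentiable ℝ f) (v p : ℝ × ℝ) :
    fderiv ℝ (fun q => f (q + v)) p = fderiv ℝ f (p + v) := by
  have h1 : HasFDerivAt (fun q : ℝ × ℝ => q + v) (ContinuousLinearMap.id ℝ (ℝ × ℝ)) p := by
    simpa using (hasFDerivAt_id p).add_const v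
  have := ((hf (p + v)).hasFDerivAt.comp p h1).fderiv
  simpa [Function.comp_def] using this

lemma fderiv_dIter {f : ℝ × ℝ → E} (hf : ContDiff ℝ 1 f) (L : List (ℝ × ℝ)) (p : ℝ × ℝ) :
    fderiv ℝ (dIter L f) p = dIter L (fderiv ℝ f) p := by
  induction L generalizing p with
  | nil => rfl
  | cons v L ih =>
      have hd : Differentiable ℝ (dIter L f) :=
        (contDiff_dIter hf L).differentiable (by norm_num)
      have : fderiv ℝ (dOp v (dIter L f)) p
          = fderiv ℝ (fun q => dIter L f (q + v)) p - fderiv ℝ (dIter L f) p := by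
        exact fderiv_sub ((hd.comp ((differentiable_id).add_const v)) p) (hd p)
      rw [show dIter (v :: L) f = dOp v (dIter L f) from rfl, this,
        fderiv_translate hd v p, ih, ih]
      rfl

lemma dIter_norm_le (m : ℕ) :
    ∀ {E : Type} [NormedAddCommGroup E] [NormedSpace ℝ E] (f : ℝ × ℝ → E),
      ContDiff ℝ (m : ℕ∞) f → ∀ (M : ℝ) (R : ℝ),
      (∀ q : ℝ × ℝ, ‖q‖ ≤ R → ‖iteratedFDeriv ℝ m f q‖ ≤ M) →
      ∀ L : List (ℝ × ℝ), L.length = m → ∀ p : ℝ × ℝ, ‖p‖ + (L.map norm).sum ≤ R →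
      ‖dIter L f p‖ ≤ M * (L.map norm).prod := by
  induction m with
  | zero =>
      intro E _ _ f hf M R hM L hL p hp
      rw [List.length_eq_zero_iff] at hL
      subst hL
      simpa [dIter] using hM p (by simpa using hp)
  | succ m ih =>
      intro E _ _ f hf M R hM L hL p hp
      match L, hL with
      | v :: L, hL =>
        have hL' : L.length = m := by simpa using hL
        have hf1 : ContDiff ℝ 1 f := hf.of_le (by exact_mod_cast Nat.one_le_iff_ne_zero.mpr (by simp))
        have hfd : ContDiff ℝ (m : ℕ∞) (fderiv ℝ f) := by
          apply hf.fderiv_right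
          norm_cast
        -- bound on the iterated derivative of fderiv f
        have hMd : ∀ q : ℝ × ℝ, ‖q‖ ≤ R → ‖iteratedFDeriv ℝ m (fderiv ℝ f) q‖ ≤ M := by
          intro q hq
          rw [norm_iteratedFDeriv_fderiv]
          exact hM q hq
        -- MVT on the ball of radius ‖p‖ + ‖v‖
        have hconv : Convex ℝ (Metric.closedBall (0 : ℝ × ℝ) (‖p‖ + ‖v‖)) :=
          convex_closedBall _ _
        have hdiff : ∀ q ∈ Metric.closedBall (0 : ℝ × ℝ) (‖p‖ + ‖v‖),
            DifferentiableAt ℝ (dIter L f) q := fun q _ =>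
          (contDiff_dIter hf1 L).differentiable (by norm_num) q
        have hbound : ∀ q ∈ Metric.closedBall (0 : ℝ × ℝ) (‖p‖ + ‖v‖),
            ‖fderiv ℝ (dIter L f) q‖ ≤ M * (L.map norm).prod := by
          intro q hq
          rw [fderiv_dIter hf1 L q]
          apply ih (fderiv ℝ f) hfd M R hMd L hL' q
          have hq' : ‖q‖ ≤ ‖p‖ + ‖v‖ := by simpa using hq
          have : (List.map norm (v :: L)).sum = ‖v‖ + (L.map norm).sum := by simp
          linarith [hp, this ▸ hp]
        have hmem1 : p + v ∈ Metric.closedBall (0 : ℝ × ℝ) (‖p‖ + ‖v‖) := by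
          simp only [Metric.mem_closedBall, dist_zero_right]
          exact norm_add_le p v
        have hmem2 : p ∈ Metric.closedBall (0 : ℝ × ℝ) (‖p‖ + ‖v‖) := by
          simp only [Metric.mem_closedBall, dist_zero_right]
          linarith [norm_nonneg v]
        have := hconv.norm_image_sub_le_of_norm_fderiv_le hdiff hbound hmem2 hmem1
        have h2 : ‖dIter (v :: L) f p‖ ≤ M * (L.map norm).prod * ‖v‖ := by
          simpa [dIter, dOp] using this
        calc ‖dIter (v :: L) f p‖ ≤ M * (L.map norm).prod * ‖v‖ := h2
          _ = M * ((v :: L).map norm).prod := by simp; ring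

/-- backward difference on `ℤ`-sequences -/
def dZ (b : ℤ → ℂ) : ℤ → ℂ := fun j => b (j - 1) - b j

lemma dZ_periodic {b : ℤ → ℂ} {N : ℤ} (hb : ∀ j, b (j + N) = b j) :
    ∀ j, dZ b (j + N) = dZ b j := by
  intro j
  simp only [dZ]
  rw [show j + N - 1 = (j - 1) + N by ring, hb, hb]

lemma abel_step {N : ℕ} (hN : 1 ≤ N) {ω : ℂ} (hω : ω ^ N = 1) {b : ℤ → ℂ}
    (hb : ∀ j, b (j + N) = b j) :
    (ω - 1) * ∑ j ∈ Finset.range N, b j * ω ^ j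
      = ∑ j ∈ Finset.range N, dZ b j * ω ^ j := by
  have key : ∑ j ∈ Finset.range N, b ((j : ℤ) - 1) * ω ^ j
      = ∑ j ∈ Finset.range N, b j * ω ^ (j + 1) := by
    -- LHS = Σ_{j<N} g j, RHS = Σ_{j<N} g (j+1), g j := b (j-1) ω^j
    set g : ℕ → ℂ := fun j => b ((j : ℤ) - 1) * ω ^ j with hg
    have h1 : ∀ j : ℕ, b (j : ℤ) * ω ^ (j + 1) = g (j + 1) := by
      intro j; simp only [hg]; push_cast; ring_nf
    have hgN : g N = g 0 := by
      simp only [hg, hω, pow_zero, mul_one]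
      rw [show ((N : ℤ) - 1) = -1 + N by ring, hb]
      norm_num
    rw [Finset.sum_congr rfl (fun j _ => h1 j)]
    have e1 := Finset.sum_range_succ' g N
    have e2 := Finset.sum_range_succ g N
    rw [hgN] at e2
    linear_combination e1 - e2
  rw [sub_mul, one_mul, Finset.mul_sum]
  have h3 : ∀ j ∈ Finset.range N, ω * (b (j : ℤ) * ω ^ j) = b (j : ℤ) * ω ^ (j + 1) := by
    intro j _; rw [pow_succ]; ring
  rw [Finset.sum_congr rfl h3, ← key, ← Finset.sum_sub_distrib]
  exact Finset.sum_congr rfl (fun j _ => by simp only [dZ]; ring)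

lemma dZ_iter_periodic {b : ℤ → ℂ} {N : ℤ} (hb : ∀ j, b (j + N) = b j) (l : ℕ) :
    ∀ j, (dZ^[l] b) (j + N) = (dZ^[l] b) j := by
  induction l with
  | zero => exact hb
  | succ l ih => rw [Function.iterate_succ_apply']; exact dZ_periodic ih

lemma abel_iter {N : ℕ} (hN : 1 ≤ N) {ω : ℂ} (hω : ω ^ N = 1) (l : ℕ) {b : ℤ → ℂ}
    (hb : ∀ j, b (j + N) = b j) :
    (ω - 1) ^ l * ∑ j ∈ Finset.range N, b j * ω ^ j
      = ∑ j ∈ Finset.range N, (dZ^[l] b) j * ω ^ j := by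
  induction l generalizing b with
  | zero => simp
  | succ l ih =>
      have h1 : (ω - 1) ^ (l + 1) * ∑ j ∈ Finset.range N, b j * ω ^ j
          = (ω - 1) ^ l * ((ω - 1) * ∑ j ∈ Finset.range N, b j * ω ^ j) := by ring
      rw [h1, abel_step hN hω hb, ih (dZ_periodic hb)]
      simp [Function.iterate_succ_apply]

lemma dZ_iter_sum {s : Finset ℕ} (l : ℕ) (c : ℤ → ℕ → ℂ) :
    dZ^[l] (fun j => ∑ j' ∈ s, c j j') = fun j => ∑ j' ∈ s, dZ^[l] (fun i => c i j') j := by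
  induction l generalizing c with
  | zero => rfl
  | succ l ih =>
      rw [Function.iterate_succ_apply]
      have h1 : dZ (fun j => ∑ j' ∈ s, c j j')
          = fun j => ∑ j' ∈ s, (dZ fun i => c i j') j := by
        funext j
        simp only [dZ, ← Finset.sum_sub_distrib]
      rw [h1, ih]
      funext j
      refine Finset.sum_congr rfl (fun j' _ => ?_)
      rw [Function.iterate_succ_apply]

lemma dIter_append (L1 L2 : List (ℝ × ℝ)) (f : ℝ × ℝ → ℂ) :
    dIter (L1 ++ L2) f = dIter L1 (dIter L2 f) := by
  induction L1 with
  | nil => rfl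
  | cons v L ih => simp [dIter, ih]

lemma dZ_iter_comp_snd (g : ℝ × ℝ → ℂ) (u : ℝ) {N : ℝ} (hN : N ≠ 0) (l : ℕ) :
    dZ^[l] (fun i' : ℤ => g (u, (i' : ℝ) / N))
      = fun i' : ℤ => dIter (List.replicate l ((0 : ℝ), -1 / N)) g (u, (i' : ℝ) / N) := by
  induction l with
  | zero => rfl
  | succ l ih =>
      rw [Function.iterate_succ_apply', ih]
      funext i'
      have key : ∀ i'' : ℤ, (u, ((i'' : ℝ) - 1) / N) = (u, (i'' : ℝ) / N) + ((0 : ℝ), -1 / N) := by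
        intro i''
        have h2 : ((i'' : ℝ) - 1) / N = (i'' : ℝ) / N + -1 / N := by field_simp; ring
        rw [Prod.mk_add_mk, add_zero, h2]
      simp only [List.replicate_succ, dIter, dOp, dZ]
      push_cast
      rw [key i']

lemma dZ_iter_comp_fst (h : ℝ × ℝ → ℂ) (w : ℝ) {N : ℝ} (hN : N ≠ 0) (l : ℕ) :
    dZ^[l] (fun i : ℤ => h ((i : ℝ) / N, w))
      = fun i : ℤ => dIter (List.replicate l ((-1 / N : ℝ), 0)) h ((i : ℝ) / N, w) := by
  induction l with
  | zero => rfl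
  | succ l ih =>
      rw [Function.iterate_succ_apply', ih]
      funext i'
      have key : ∀ i'' : ℤ, (((i'' : ℝ) - 1) / N, w) = ((i'' : ℝ) / N, w) + ((-1 / N : ℝ), 0) := by
        intro i''
        have h2 : ((i'' : ℝ) - 1) / N = (i'' : ℝ) / N + -1 / N := by field_simp; ring
        rw [Prod.mk_add_mk, add_zero, h2]
      simp only [List.replicate_succ, dIter, dOp, dZ]
      push_cast
      rw [key i']

lemma abs_exp_theta_sub_one (θ : ℝ) :
    ‖(Complex.exp (θ * Complex.I) - 1)‖ = 2 * |Real.sin (θ / 2)| := by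
  rw [Complex.exp_mul_I]
  have h1 : Complex.cos θ + Complex.sin θ * Complex.I - 1
      = ((Real.cos θ - 1 : ℝ) : ℂ) + ((Real.sin θ : ℝ) : ℂ) * Complex.I := by
    push_cast [Complex.ofReal_cos, Complex.ofReal_sin]
    ring
  rw [h1, Complex.norm_add_mul_I]
  have h2 : (Real.cos θ - 1) ^ 2 + Real.sin θ ^ 2 = (2 * |Real.sin (θ / 2)|) ^ 2 := by
    have h3 := Real.sin_sq_eq_half_sub (θ / 2)
    have h4 := Real.sin_sq_add_cos_sq θ
    have h5 : |Real.sin (θ / 2)| ^ 2 = Real.sin (θ / 2) ^ 2 := sq_abs _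
    rw [show 2 * (θ / 2) = θ by ring] at h3
    nlinarith [h3, h4, h5]
  rw [h2, Real.sqrt_sq (by positivity)]

lemma sin_pi_mul_ge {t : ℝ} (h0 : 0 ≤ t) (h1 : t ≤ 1) :
    2 * min t (1 - t) ≤ Real.sin (π * t) := by
  rcases le_or_gt t (1 / 2) with h | h
  · have := Real.mul_le_sin (x := π * t) (by positivity)
      (by rw [div_eq_mul_inv, mul_comm]; nlinarith [Real.pi_pos])
    have hmin : min t (1 - t) = t := min_eq_left (by linarith)
    rw [hmin]
    have hpi : 2 / π * (π * t) = 2 * t := by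
      field_simp
    linarith [hpi ▸ this]
  · have h2 : Real.sin (π * t) = Real.sin (π * (1 - t)) := by
      rw [show π * (1 - t) = π - π * t by ring, Real.sin_pi_sub]
    have := Real.mul_le_sin (x := π * (1 - t)) (by nlinarith [Real.pi_pos])
      (by rw [div_eq_mul_inv, mul_comm]; nlinarith [Real.pi_pos])
    have hmin : min t (1 - t) = 1 - t := min_eq_right (by linarith)
    have hpi : 2 / π * (π * (1 - t)) = 2 * (1 - t) := by
      field_simp
    rw [hmin, h2]
    linarith [hpi ▸ this]

lemma omega_sub_one_lb (N : ℕ) (hN : 1 ≤ N) (x : ℤ) :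
    (4 : ℝ) * (min (x % N : ℤ) ((N : ℤ) - x % N) : ℤ) / N
      ≤ ‖(Complex.exp (2 * (π : ℂ) * Complex.I * x / N) - 1)‖ := by
  have hNpos : (0 : ℝ) < N := by exact_mod_cast hN
  have hNz : (N : ℤ) ≠ 0 := by positivity
  set xb : ℤ := x % N with hxb
  have hxb0 : 0 ≤ xb := Int.emod_nonneg x hNz
  have hxbN : xb < N := Int.emod_lt_of_pos x (by positivity)
  -- reduce exponent to xb
  have hexp : Complex.exp (2 * (π : ℂ) * Complex.I * x / N)
      = Complex.exp ((2 * π * (xb : ℝ) / N : ℝ) * Complex.I) := by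
    have hdecomp : (x : ℂ) = (xb : ℂ) + (N : ℂ) * ((x / N : ℤ) : ℂ) := by
      push_cast [hxb]
      rw [Int.emod_def]
      push_cast
      ring
    rw [show 2 * (π : ℂ) * Complex.I * x / N
        = (x : ℂ) * (2 * π * Complex.I) / N by ring, hdecomp]
    have hNC : (N : ℂ) ≠ 0 := by
      simp only [ne_eq, Nat.cast_eq_zero]
      omega
    rw [show ((xb : ℂ) + (N : ℂ) * ((x / N : ℤ) : ℂ)) * (2 * (π:ℂ) * Complex.I) / (N:ℂ)
        = (xb : ℂ) * (2 * (π:ℂ) * Complex.I) / N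
          + ((x / N : ℤ) : ℂ) * (2 * (π:ℂ) * Complex.I) by
      field_simp]
    rw [Complex.exp_add, Complex.exp_int_mul_two_pi_mul_I, mul_one]
    congr 1
    push_cast
    field_simp
  rw [hexp, abs_exp_theta_sub_one]
  set t : ℝ := (xb : ℝ) / N with ht
  have ht0 : 0 ≤ t := by positivity
  have ht1 : t ≤ 1 := by
    rw [ht, div_le_one hNpos]
    exact_mod_cast hxbN.le
  have harg : 2 * π * (xb : ℝ) / N / 2 = π * t := by rw [ht]; ring
  rw [harg]
  have hs := sin_pi_mul_ge ht0 ht1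
  have habs : Real.sin (π * t) ≤ |Real.sin (π * t)| := le_abs_self _
  have hmin : ((min xb ((N:ℤ) - xb) : ℤ) : ℝ) / N = min t (1 - t) := by
    push_cast
    rw [← min_div_div_right hNpos.le]
    congr 1
    rw [ht]
    field_simp
  have h4 : 4 * ((min xb ((N:ℤ) - xb) : ℤ) : ℝ) / N
      = 2 * (2 * (((min xb ((N:ℤ) - xb) : ℤ) : ℝ) / N)) := by ring
  rw [h4, hmin]
  linarith

lemma dZ_iter_mul_const (l : ℕ) (f : ℤ → ℂ) (c : ℂ) :
    dZ^[l] (fun i => f i * c) = fun i => dZ^[l] f i * c := by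
  induction l generalizing f with
  | zero => rfl
  | succ l ih =>
      rw [Function.iterate_succ_apply, Function.iterate_succ_apply]
      have h1 : dZ (fun i => f i * c) = fun i => dZ f i * c := by
        funext i; simp only [dZ]; ring
      rw [h1, ih]



/-- The `(n+1)`-periodic weight `χ_n : ℤ → ℝ`, defined on the representative
`x̄ = x mod (n+1) ∈ {0,…,n}` by `χ_n(x̄) = min(1 + x̄, n + 2 − x̄)`. -/
def chiN (n : ℕ) (x : ℤ) : ℝ :=
  min ((1 : ℝ) + ((x % ((n : ℤ) + 1) : ℤ) : ℝ)) ((n : ℝ) + 2 - ((x % ((n : ℤ) + 1) : ℤ) : ℝ))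

set_option maxHeartbeats 1000000 in
/-- Decay estimate for the oscillating sums
`H^{(n)}_{x,x'} = (n+1)^{−2} Σ_{j,j'=0}^n Φ(j/(n+1), j'/(n+1)) e^{2πijx/(n+1)} e^{2πij'x'/(n+1)}`:
if `Φ` is `C^k` and `1`-periodic in each variable, then `|H^{(n)}_{x,x'}| ≤ C χ_n(x)^{−ℓ} χ_n(x')^{−ℓ'}`
for all `ℓ + ℓ' ≤ k`, uniformly in `n ≥ 1` and `x, x' ∈ ℤ`. -/
theorem oscillating_sum_decay (k : ℕ) (hk : 1 ≤ k) (Φ : ℝ × ℝ → ℂ)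
    (hΦ : ContDiff ℝ (k : ℕ∞) Φ)
    (hper1 : ∀ u v : ℝ, Φ (u + 1, v) = Φ (u, v))
    (hper2 : ∀ u v : ℝ, Φ (u, v + 1) = Φ (u, v)) :
    ∃ C > 0, ∀ n : ℕ, 1 ≤ n → ∀ x x' : ℤ, ∀ l l' : ℕ, l + l' ≤ k →
      ‖((1 / ((n : ℂ) + 1) ^ 2) *
        ∑ j ∈ Finset.range (n + 1), ∑ j' ∈ Finset.range (n + 1),
          Φ ((j : ℝ) / (n + 1), (j' : ℝ) / (n + 1)) *
            Complex.exp (2 * (π : ℂ) * Complex.I * (j : ℂ) * (x : ℂ) / ((n : ℂ) + 1)) *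
            Complex.exp (2 * (π : ℂ) * Complex.I * (j' : ℂ) * (x' : ℂ) / ((n : ℂ) + 1)))‖
      ≤ C / (chiN n x ^ l * chiN n x' ^ l') := by
  classical
  set R : ℝ := (k : ℝ) + 2 with hR
  -- a uniform bound on all iterated derivatives of order ≤ k on the ball of radius R
  obtain ⟨M, hM0, hM⟩ : ∃ M : ℝ, 0 ≤ M ∧ ∀ m : ℕ, m ≤ k →
      ∀ q : ℝ × ℝ, ‖q‖ ≤ R → ‖iteratedFDeriv ℝ m Φ q‖ ≤ M := by
    have hbd : ∀ m : Fin (k + 1), ∃ Mm : ℝ, ∀ q ∈ Metric.closedBall (0 : ℝ × ℝ) R,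
        ‖iteratedFDeriv ℝ (m : ℕ) Φ q‖ ≤ Mm := by
      intro m
      have hc : Continuous (iteratedFDeriv ℝ (m : ℕ) Φ) := by
        apply hΦ.continuous_iteratedFDeriv
        exact_mod_cast Nat.le_of_lt_succ m.2
      exact (isCompact_closedBall (0 : ℝ × ℝ) R).exists_bound_of_continuousOn
        hc.continuousOn
    choose F hF using hbd
    refine ⟨max 0 (Finset.univ.sup' Finset.univ_nonempty F), le_max_left _ _, ?_⟩
    intro m hm q hq
    refine le_trans (hF ⟨m, by omega⟩ q (by simpa [Metric.mem_closedBall, dist_zero_right] using hq)) ?_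
    exact le_max_of_le_right (Finset.le_sup' F (Finset.mem_univ ⟨m, by omega⟩))
  refine ⟨M + 1, by positivity, ?_⟩
  intro n hn x x' l l' hll
  set N : ℕ := n + 1 with hNdef
  have hN1 : 1 ≤ N := by omega
  have hNR : (0 : ℝ) < N := by positivity
  have hNz : (N : ℝ) ≠ 0 := hNR.ne'
  -- distances to the nearest multiple of N
  set d : ℤ := min (x % N) ((N : ℤ) - x % N) with hd
  set d' : ℤ := min (x' % N) ((N : ℤ) - x' % N) with hd'
  have hdnn : 0 ≤ d := le_min (Int.emod_nonneg x (by exact_mod_cast hNz))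
    (by have := Int.emod_lt_of_pos x (by positivity : (0:ℤ) < (N:ℤ)); omega)
  have hdnn' : 0 ≤ d' := le_min (Int.emod_nonneg x' (by exact_mod_cast hNz))
    (by have := Int.emod_lt_of_pos x' (by positivity : (0:ℤ) < (N:ℤ)); omega)
  -- chiN = 1 + d
  have hchi : ∀ y : ℤ, chiN n y = 1 + ((min (y % N) ((N : ℤ) - y % N) : ℤ) : ℝ) := by
    intro y
    unfold chiN
    push_cast
    rw [show (n : ℝ) + 2 - ((y % ((n:ℤ)+1) : ℤ) : ℝ)
        = 1 + ((n : ℝ) + 1 - ((y % ((n:ℤ)+1) : ℤ) : ℝ)) by ring]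
    rw [min_add_add_left]
    simp [hNdef]
  -- effective exponents (no summation by parts when the distance is 0)
  set lt : ℕ := if d = 0 then 0 else l with hlt
  set lt' : ℕ := if d' = 0 then 0 else l' with hlt'
  have hltle : lt ≤ l := by rw [hlt]; split <;> omega
  have hltle' : lt' ≤ l' := by rw [hlt']; split <;> omega
  have htot : lt + lt' ≤ k := by omega
  -- the two roots of unity
  set ω : ℂ := Complex.exp (2 * (π:ℂ) * Complex.I * x / N) with hωdef
  set ω' : ℂ := Complex.exp (2 * (π:ℂ) * Complex.I * x' / N) with hω'def
  have hNCz : (N : ℂ) ≠ 0 := by exact_mod_cast hNz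
  have hroot : ∀ y : ℤ, (Complex.exp (2 * (π:ℂ) * Complex.I * y / N)) ^ N = 1 := by
    intro y
    rw [← Complex.exp_nat_mul]
    rw [show (N : ℂ) * (2 * (π:ℂ) * Complex.I * y / N) = (y : ℂ) * (2 * π * Complex.I) by
      field_simp]
    exact Complex.exp_int_mul_two_pi_mul_I y
  have hωN : ω ^ N = 1 := hroot x
  have hω'N : ω' ^ N = 1 := hroot x'
  -- the sampled function
  set a : ℤ → ℤ → ℂ := fun i i' => Φ ((i : ℝ) / N, (i' : ℝ) / N) with ha
  have haper1 : ∀ i i' : ℤ, a (i + N) i' = a i i' := by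
    intro i i'
    show Φ (((i + N : ℤ) : ℝ) / N, _) = _
    rw [show ((i + N : ℤ) : ℝ) / N = (i : ℝ) / N + 1 by push_cast; field_simp]
    exact hper1 _ _
  have haper2 : ∀ i i' : ℤ, a i (i' + N) = a i i' := by
    intro i i'
    show Φ (_, ((i' + N : ℤ) : ℝ) / N) = _
    rw [show ((i' + N : ℤ) : ℝ) / N = (i' : ℝ) / N + 1 by push_cast; field_simp]
    exact hper2 _ _
  set S : ℂ := ∑ j ∈ Finset.range N, ∑ j' ∈ Finset.range N,
      a j j' * ω ^ j * ω' ^ j' with hS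
  have hSeq : ‖((1 / ((n : ℂ) + 1) ^ 2) *
      ∑ j ∈ Finset.range (n + 1), ∑ j' ∈ Finset.range (n + 1),
        Φ ((j : ℝ) / (n + 1), (j' : ℝ) / (n + 1)) *
          Complex.exp (2 * (π : ℂ) * Complex.I * (j : ℂ) * (x : ℂ) / ((n : ℂ) + 1)) *
          Complex.exp (2 * (π : ℂ) * Complex.I * (j' : ℂ) * (x' : ℂ) / ((n : ℂ) + 1)))‖
      = ‖S‖ / (N : ℝ) ^ 2 := by
    have hsum : ∑ j ∈ Finset.range (n + 1), ∑ j' ∈ Finset.range (n + 1),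
        Φ ((j : ℝ) / (n + 1), (j' : ℝ) / (n + 1)) *
          Complex.exp (2 * (π : ℂ) * Complex.I * (j : ℂ) * (x : ℂ) / ((n : ℂ) + 1)) *
          Complex.exp (2 * (π : ℂ) * Complex.I * (j' : ℂ) * (x' : ℂ) / ((n : ℂ) + 1)) = S := by
      rw [hS]
      refine Finset.sum_congr rfl (fun j hj => Finset.sum_congr rfl (fun j' hj' => ?_))
      congr 1
      · congr 1
        · show Φ _ = Φ _
          norm_num [hNdef, ha]
        · rw [hωdef, ← Complex.exp_nat_mul]
          congr 1
          push_cast [hNdef]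
          ring
      · rw [hω'def, ← Complex.exp_nat_mul]
        congr 1
        push_cast [hNdef]
        ring
    rw [hsum, norm_mul, norm_div, norm_one, norm_pow]
    rw [show ((n : ℂ) + 1) = (N : ℂ) by push_cast [hNdef]; ring]
    rw [Complex.norm_natCast]
    ring
  set L1 : List (ℝ × ℝ) := List.replicate lt ((-1 / (N:ℝ) : ℝ), 0) with hL1
  set L2 : List (ℝ × ℝ) := List.replicate lt' ((0 : ℝ), -1 / (N:ℝ)) with hL2
  set b : ℤ → ℂ := fun i => ∑ j' ∈ Finset.range N, a i j' * ω' ^ j' with hb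
  have hbper : ∀ i, b (i + N) = b i := by
    intro i
    simp only [hb]
    exact Finset.sum_congr rfl (fun j' _ => by rw [haper1])
  have hS2 : S = ∑ j ∈ Finset.range N, b j * ω ^ j := by
    rw [hS]
    refine Finset.sum_congr rfl (fun j hj => ?_)
    simp only [hb]
    rw [Finset.sum_mul]
    exact Finset.sum_congr rfl (fun j' _ => by ring)
  have h1 : (ω - 1) ^ lt * S = ∑ j ∈ Finset.range N, (dZ^[lt] b) j * ω ^ j := by
    rw [hS2]; exact abel_iter hN1 hωN lt hbper
  have h2 : dZ^[lt] b = fun i => ∑ j' ∈ Finset.range N,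
      dZ^[lt] (fun i0 => a i0 j') i * ω' ^ j' := by
    have := dZ_iter_sum (s := Finset.range N) lt (fun i j' => a i (j' : ℤ) * ω' ^ j')
    rw [show b = (fun i => ∑ j' ∈ Finset.range N, a i (j' : ℤ) * ω' ^ j') from rfl, this]
    funext i
    exact Finset.sum_congr rfl (fun j' _ => by rw [dZ_iter_mul_const])
  set B : ℤ → ℂ := fun i' => ∑ j ∈ Finset.range N,
      dZ^[lt] (fun i => a i i') j * ω ^ j with hB
  have h3 : (ω - 1) ^ lt * S = ∑ j' ∈ Finset.range N, B j' * ω' ^ j' := by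
    rw [h1]
    have : ∀ j ∈ Finset.range N, (dZ^[lt] b) j * ω ^ j
        = ∑ j' ∈ Finset.range N, dZ^[lt] (fun i0 => a i0 j') j * ω' ^ j' * ω ^ j := by
      intro j _
      rw [h2, Finset.sum_mul]
    rw [Finset.sum_congr rfl this, Finset.sum_comm]
    refine Finset.sum_congr rfl (fun j' _ => ?_)
    simp only [hB]
    rw [Finset.sum_mul]
    exact Finset.sum_congr rfl (fun j _ => by ring)
  have hBper : ∀ i', B (i' + N) = B i' := by
    intro i'
    simp only [hB]
    refine Finset.sum_congr rfl (fun j _ => ?_)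
    have : (fun i => a i (i' + N)) = fun i => a i i' := funext (fun i => haper2 i i')
    rw [this]
  have h4 : (ω' - 1) ^ lt' * ((ω - 1) ^ lt * S)
      = ∑ j' ∈ Finset.range N, (dZ^[lt'] B) j' * ω' ^ j' := by
    rw [h3]; exact abel_iter hN1 hω'N lt' hBper
  have h5 : dZ^[lt'] B = fun i' => ∑ j ∈ Finset.range N,
      dZ^[lt'] (fun i0' => dZ^[lt] (fun i => a i i0') (j : ℤ)) i' * ω ^ j := by
    have := dZ_iter_sum (s := Finset.range N) lt'
      (fun i' j => dZ^[lt] (fun i => a i i') (j : ℤ) * ω ^ j)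
    rw [show B = (fun i' => ∑ j ∈ Finset.range N,
      dZ^[lt] (fun i => a i i') (j : ℤ) * ω ^ j) from rfl, this]
    funext i'
    exact Finset.sum_congr rfl (fun j _ => by rw [dZ_iter_mul_const])
  -- identify the iterated differences with dIter applied to Φ
  have h6 : ∀ j : ℤ, ∀ j' : ℕ,
      dZ^[lt'] (fun i0' => dZ^[lt] (fun i => a i i0') j) (j' : ℤ)
        = dIter (L2 ++ L1) Φ ((j : ℝ) / N, (j' : ℝ) / N) := by
    intro j j'
    have e1 : ∀ i0' : ℤ, dZ^[lt] (fun i => a i i0') j = dIter L1 Φ ((j : ℝ) / N, (i0' : ℝ) / N) := by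
      intro i0'
      have := dZ_iter_comp_fst Φ ((i0' : ℝ) / N) hNz lt
      exact congrFun this j
    have e2 : (fun i0' : ℤ => dZ^[lt] (fun i => a i i0') j)
        = fun i0' : ℤ => dIter L1 Φ ((j : ℝ) / N, (i0' : ℝ) / N) := funext e1
    rw [e2]
    have := dZ_iter_comp_snd (dIter L1 Φ) ((j : ℝ) / N) hNz lt'
    rw [congrFun this (j' : ℤ), ← dIter_append, ← hL2]
    push_cast
    rfl
  have hAbel : (ω' - 1) ^ lt' * ((ω - 1) ^ lt * S)
      = ∑ j' ∈ Finset.range N, (∑ j ∈ Finset.range N,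
          dIter (L2 ++ L1) Φ ((j : ℝ) / N, (j' : ℝ) / N) * ω ^ j) * ω' ^ j' := by
    rw [h4]
    refine Finset.sum_congr rfl (fun j' _ => ?_)
    rw [h5]
    congr 1
    exact Finset.sum_congr rfl (fun j _ => by rw [h6]; norm_cast)
  -- upper bound for the differenced sum
  have habs1 : ∀ y : ℤ, ‖(Complex.exp (2 * (π:ℂ) * Complex.I * y / N))‖ = 1 := by
    intro y
    rw [show 2 * (π:ℂ) * Complex.I * y / N = ((2 * π * y / N : ℝ) : ℂ) * Complex.I by
      push_cast; ring]
    exact Complex.norm_exp_ofReal_mul_I _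
  have hterm : ∀ j j' : ℕ, j ∈ Finset.range N → j' ∈ Finset.range N →
      ‖(dIter (L2 ++ L1) Φ ((j : ℝ) / N, (j' : ℝ) / N))‖
        ≤ M * (1 / N) ^ (lt + lt') := by
    intro j j' hj hj'
    have hlen : (L2 ++ L1).length = lt' + lt := by simp [hL1, hL2]
    have hcd : ContDiff ℝ ((lt' + lt : ℕ) : ℕ∞) Φ := hΦ.of_le (by exact_mod_cast (by omega : lt' + lt ≤ k))
    have hMle : ∀ q : ℝ × ℝ, ‖q‖ ≤ R → ‖iteratedFDeriv ℝ (lt' + lt) Φ q‖ ≤ M :=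
      fun q hq => hM _ (by omega) q hq
    have hmapnorm : ((L2 ++ L1).map norm) = List.replicate lt' (1 / (N:ℝ)) ++ List.replicate lt (1 / (N:ℝ)) := by
      simp only [hL1, hL2, List.map_append, List.map_replicate]
      congr 2
      · rw [Prod.norm_def]
        simp [abs_of_nonneg hNR.le, abs_div]
      · rw [Prod.norm_def]
        simp [abs_of_nonneg hNR.le, abs_div]
    have hsumnorm : ((L2 ++ L1).map norm).sum = (lt' + lt : ℝ) * (1 / N) := by
      rw [hmapnorm]
      simp [List.sum_replicate, add_mul]
    have hprodnorm : ((L2 ++ L1).map norm).prod = (1 / (N:ℝ)) ^ (lt + lt') := by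
      rw [hmapnorm]
      simp [List.prod_replicate, ← pow_add, Nat.add_comm]
    have hjN : (j : ℝ) < N := by exact_mod_cast Finset.mem_range.mp hj
    have hj'N : (j' : ℝ) < N := by exact_mod_cast Finset.mem_range.mp hj'
    have hpnorm : ‖((j : ℝ) / N, (j' : ℝ) / N)‖ ≤ 1 := by
      rw [Prod.norm_def]
      have e1 : ‖(j : ℝ) / N‖ ≤ 1 := by
        rw [Real.norm_eq_abs, abs_div, abs_of_nonneg hNR.le, abs_of_nonneg (by positivity),
          div_le_one hNR]
        linarith
      have e2 : ‖(j' : ℝ) / N‖ ≤ 1 := by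
        rw [Real.norm_eq_abs, abs_div, abs_of_nonneg hNR.le, abs_of_nonneg (by positivity),
          div_le_one hNR]
        linarith
      exact max_le e1 e2
    have hR' : ‖((j : ℝ) / N, (j' : ℝ) / N)‖ + ((L2 ++ L1).map norm).sum ≤ R := by
      rw [hsumnorm, hR]
      have : (lt' + lt : ℝ) * (1 / N) ≤ (k : ℝ) := by
        have h1 : (lt' + lt : ℝ) ≤ (k : ℝ) := by exact_mod_cast (by omega : lt' + lt ≤ k)
        have h2 : (1 : ℝ) / N ≤ 1 := by
          rw [div_le_one hNR]; exact_mod_cast hN1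
        nlinarith [hNR]
      linarith
    have := dIter_norm_le (lt' + lt) Φ hcd M R hMle (L2 ++ L1) hlen
      ((j : ℝ) / N, (j' : ℝ) / N) hR'
    rw [hprodnorm] at this
    exact this
  have hT : ‖((ω' - 1) ^ lt' * ((ω - 1) ^ lt * S))‖
      ≤ (N : ℝ) ^ 2 * (M * (1 / N) ^ (lt + lt')) := by
    rw [hAbel]
    calc ‖(∑ j' ∈ Finset.range N, (∑ j ∈ Finset.range N,
            dIter (L2 ++ L1) Φ ((j : ℝ) / N, (j' : ℝ) / N) * ω ^ j) * ω' ^ j')‖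
        ≤ ∑ j' ∈ Finset.range N, ‖((∑ j ∈ Finset.range N,
            dIter (L2 ++ L1) Φ ((j : ℝ) / N, (j' : ℝ) / N) * ω ^ j) * ω' ^ j')‖ := by
          exact norm_sum_le _ _
      _ ≤ ∑ j' ∈ Finset.range N, (N : ℝ) * (M * (1 / N) ^ (lt + lt')) := by
          refine Finset.sum_le_sum (fun j' hj' => ?_)
          rw [norm_mul, norm_pow, habs1, one_pow, mul_one]
          calc ‖(∑ j ∈ Finset.range N,
                dIter (L2 ++ L1) Φ ((j : ℝ) / N, (j' : ℝ) / N) * ω ^ j)‖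
              ≤ ∑ j ∈ Finset.range N, ‖(dIter (L2 ++ L1) Φ ((j : ℝ) / N, (j' : ℝ) / N) * ω ^ j)‖ :=
                norm_sum_le _ _
            _ ≤ ∑ j ∈ Finset.range N, M * (1 / N) ^ (lt + lt') := by
                refine Finset.sum_le_sum (fun j hj => ?_)
                rw [norm_mul, norm_pow, habs1, one_pow, mul_one]
                exact hterm j j' hj hj'
            _ = (N : ℝ) * (M * (1 / N) ^ (lt + lt')) := by
                rw [Finset.sum_const, Finset.card_range, nsmul_eq_mul]
      _ = (N : ℝ) ^ 2 * (M * (1 / N) ^ (lt + lt')) := by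
          rw [Finset.sum_const, Finset.card_range, nsmul_eq_mul]
          ring
  -- lower bounds for |ω - 1|, |ω' - 1|
  have hlbω : 4 * (d : ℝ) / N ≤ ‖ω - 1‖ := by
    have := omega_sub_one_lb N hN1 x
    rw [← hd] at this
    exact this
  have hlbω' : 4 * (d' : ℝ) / N ≤ ‖ω' - 1‖ := by
    have := omega_sub_one_lb N hN1 x'
    rw [← hd'] at this
    exact this
  set P : ℝ := (4 * (d : ℝ)) ^ lt * (4 * (d' : ℝ)) ^ lt' with hP
  have hfac : ∀ (dd : ℤ) (m l0 : ℕ), 0 ≤ dd → m = (if dd = 0 then 0 else l0) →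
      0 < (4 * (dd : ℝ)) ^ m ∧ (1 + (dd : ℝ)) ^ l0 ≤ (4 * (dd : ℝ)) ^ m := by
    intro dd m l0 hdd hm
    by_cases h : dd = 0
    · subst h
      simp only [if_pos rfl] at hm
      subst hm
      norm_num
    · simp only [if_neg h] at hm
      subst hm
      have h1 : (1 : ℝ) ≤ (dd : ℝ) := by exact_mod_cast (by omega : (1:ℤ) ≤ dd)
      constructor
      · exact pow_pos (by linarith) _
      · exact pow_le_pow_left₀ (by linarith) (by linarith) _
  obtain ⟨hP1pos, hch1⟩ := hfac d lt l hdnn hlt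
  obtain ⟨hP2pos, hch2⟩ := hfac d' lt' l' hdnn' hlt'
  have hPpos : 0 < P := mul_pos hP1pos hP2pos
  -- |S| * (P * (1/N)^(lt+lt')) ≤ N^2 * (M * (1/N)^(lt+lt'))
  have hSP : ‖S‖ * (P * (1 / (N:ℝ)) ^ (lt + lt'))
      ≤ (N : ℝ) ^ 2 * (M * (1 / N) ^ (lt + lt')) := by
    have e1 : ‖S‖ * (P * (1 / (N:ℝ)) ^ (lt + lt'))
        = (4 * (d : ℝ) / N) ^ lt * ((4 * (d' : ℝ) / N) ^ lt' * ‖S‖) := by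
      rw [hP, div_pow, div_pow, pow_add]
      ring
    rw [e1]
    have e2 : (4 * (d : ℝ) / N) ^ lt * ((4 * (d' : ℝ) / N) ^ lt' * ‖S‖)
        ≤ ‖ω - 1‖ ^ lt * (‖ω' - 1‖ ^ lt' * ‖S‖) := by
      have p1 : (4 * (d : ℝ) / N) ^ lt ≤ ‖ω - 1‖ ^ lt :=
        pow_le_pow_left₀ (by positivity) hlbω lt
      have p2 : (4 * (d' : ℝ) / N) ^ lt' ≤ ‖ω' - 1‖ ^ lt' :=
        pow_le_pow_left₀ (by positivity) hlbω' lt'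
      have hSnn : 0 ≤ ‖S‖ := norm_nonneg S
      have q2 : (0:ℝ) ≤ (4 * (d' : ℝ) / N) ^ lt' := by positivity
      have inner : (4 * (d' : ℝ) / N) ^ lt' * ‖S‖
          ≤ ‖ω' - 1‖ ^ lt' * ‖S‖ :=
        mul_le_mul_of_nonneg_right p2 hSnn
      have innernn : (0:ℝ) ≤ (4 * (d' : ℝ) / N) ^ lt' * ‖S‖ :=
        mul_nonneg q2 hSnn
      have rnn : (0:ℝ) ≤ ‖ω - 1‖ ^ lt :=
        pow_nonneg (norm_nonneg _) lt
      exact mul_le_mul p1 inner innernn rnn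
    refine le_trans e2 ?_
    have e3 : ‖ω - 1‖ ^ lt * (‖ω' - 1‖ ^ lt' * ‖S‖)
        = ‖((ω' - 1) ^ lt' * ((ω - 1) ^ lt * S))‖ := by
      rw [norm_mul, norm_mul, norm_pow, norm_pow]
      ring
    rw [e3]
    exact hT
  -- hence |S| / N^2 ≤ M / P
  have hc : (0 : ℝ) < (1 / (N:ℝ)) ^ (lt + lt') := by positivity
  have hSP2 : ‖S‖ * P ≤ (N : ℝ) ^ 2 * M := by
    have h := hSP
    rw [show ‖S‖ * (P * (1 / (N:ℝ)) ^ (lt + lt'))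
        = (‖S‖ * P) * (1 / (N:ℝ)) ^ (lt + lt') by ring,
      show (N:ℝ) ^ 2 * (M * (1 / (N:ℝ)) ^ (lt + lt'))
        = ((N:ℝ) ^ 2 * M) * (1 / (N:ℝ)) ^ (lt + lt') by ring] at h
    exact le_of_mul_le_mul_right h hc
  have hmain : ‖S‖ / (N : ℝ) ^ 2 ≤ M / P := by
    rw [div_le_div_iff₀ (by positivity) hPpos]
    nlinarith [hSP2]
  -- conclude
  rw [hSeq]
  have hch1' : chiN n x ^ l ≤ (4 * (d : ℝ)) ^ lt := by rw [hchi x, ← hd]; exact hch1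
  have hch2' : chiN n x' ^ l' ≤ (4 * (d' : ℝ)) ^ lt' := by rw [hchi x', ← hd']; exact hch2
  have c1 : (0:ℝ) < chiN n x := by
    rw [hchi x, ← hd]
    linarith [(by exact_mod_cast hdnn : (0:ℝ) ≤ ((d:ℤ) : ℝ))]
  have c2 : (0:ℝ) < chiN n x' := by
    rw [hchi x', ← hd']
    linarith [(by exact_mod_cast hdnn' : (0:ℝ) ≤ ((d':ℤ) : ℝ))]
  have hχpos : 0 < chiN n x ^ l * chiN n x' ^ l' := by positivity
  have hprodle : chiN n x ^ l * chiN n x' ^ l' ≤ P := by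
    rw [hP]
    exact mul_le_mul hch1' hch2' (pow_nonneg c2.le l') (le_of_lt hP1pos)
  refine le_trans hmain ?_
  exact div_le_div₀ (by linarith) (by linarith) hχpos hprodle

end
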